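/- Fix a real u ≠ 0. For real w with ξ²(w−1)w > (κ−ρξw)², define the Heston moment-explosion time T(w) := (2/√(ξ²(w−1)w − (κ−ρξw)²))·[π·1_{{ρξw−κ<0}} + arctan(√(ξ²(w−1)w − (κ−ρξw)²)/(ρξw−κ))]. Then for all sufficiently small x > 0 the condition ξ²((u/x)−1)(u/x) > (κ−ρξ(u/x))² holds, and as x → 0+, T(u/x) = (x/(ξ|u|))·(c(ρ,u) + O(x)), where c(ρ,u) := π if ρ = 0, and c(ρ,u) := (2/ρ̄)·(π·1_{{ρu≤0}} + sgn(u)·arctan(ρ̄/ρ)) if ρ ≠ 0. -/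

import Mathlib

open Filter Topology Asymptotics MeasureTheory

set_option linter.unusedVariables false

noncomputable section

def sgn' (x : ℝ) : ℝ := if 0 ≤ x then 1 else -1

/-- the Heston moment-explosion time. -/
def hestTexp (κ ρ ξ w : ℝ) : ℝ :=
  (2 / Real.sqrt (ξ ^ 2 * (w - 1) * w - (κ - ρ * ξ * w) ^ 2)) *
    ((if ρ * ξ * w - κ < 0 then Real.pi else 0) +
      Real.arctan (Real.sqrt (ξ ^ 2 * (w - 1) * w - (κ - ρ * ξ * w) ^ 2) / (ρ * ξ * w - κ)))

def cRho (ρ u : ℝ) : ℝ :=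
  if ρ = 0 then Real.pi
  else (2 / Real.sqrt (1 - ρ ^ 2)) *
    ((if ρ * u ≤ 0 then Real.pi else 0) + sgn' u * Real.arctan (Real.sqrt (1 - ρ ^ 2) / ρ))

/-- Numerator polynomial of the discriminant after clearing `x²`. -/
def Ppoly (κ ξ ρ u x : ℝ) : ℝ :=
  ξ^2*(1-ρ^2)*u^2 + (2*κ*ρ*ξ - ξ^2)*u*x - κ^2*x^2

/-- The function `x ↦ hestTexp κ ρ ξ (u/x) / x`, written in a form analytic near `0`. -/
def phiF (κ ξ ρ u x : ℝ) : ℝ :=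
  if ρ = 0 then
    2 / Real.sqrt (Ppoly κ ξ ρ u x) *
      (Real.pi/2 + Real.arctan (κ*x / Real.sqrt (Ppoly κ ξ ρ u x)))
  else
    2 / Real.sqrt (Ppoly κ ξ ρ u x) *
      ((if ρ*u ≤ 0 then Real.pi else 0) +
        Real.arctan (Real.sqrt (Ppoly κ ξ ρ u x) / (ρ*ξ*u - κ*x)))

lemma hD (κ ξ ρ u x : ℝ) (hx : x ≠ 0) :
    ξ ^ 2 * (u / x - 1) * (u / x) - (κ - ρ * ξ * (u / x)) ^ 2 = Ppoly κ ξ ρ u x / x^2 := by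
  unfold Ppoly
  field_simp
  ring

lemma diffP (κ ξ ρ u : ℝ) : Differentiable ℝ (Ppoly κ ξ ρ u) := by
  unfold Ppoly; fun_prop

lemma key (κ ξ ρ u x : ℝ) (hκ : 0 < κ) (hx : 0 < x) (hP : 0 < Ppoly κ ξ ρ u x)
    (hsign : ρ ≠ 0 → ((ρ*ξ*u - κ*x < 0 ↔ ρ*u ≤ 0) ∧ ρ*ξ*u - κ*x ≠ 0)) :
    hestTexp κ ρ ξ (u/x) = x * phiF κ ξ ρ u x := by
  have hxne : x ≠ 0 := hx.ne'
  have hs : Real.sqrt (ξ ^ 2 * (u / x - 1) * (u / x) - (κ - ρ * ξ * (u / x)) ^ 2)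
      = Real.sqrt (Ppoly κ ξ ρ u x) / x := by
    rw [hD κ ξ ρ u x hxne, Real.sqrt_div hP.le, Real.sqrt_sq hx.le]
  have hden : ρ*ξ*(u/x) - κ = (ρ*ξ*u - κ*x)/x := by field_simp
  unfold hestTexp phiF
  rw [hs, hden]
  set s := Real.sqrt (Ppoly κ ξ ρ u x) with hsdef
  have hspos : 0 < s := Real.sqrt_pos.2 hP
  by_cases h0 : ρ = 0
  · rw [if_pos h0]
    subst h0
    have hb : 0*ξ*u - κ*x = -(κ*x) := by ring
    rw [hb]
    have hcond : -(κ*x)/x < 0 := by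
      rw [div_lt_iff₀ hx, zero_mul]
      nlinarith
    rw [if_pos hcond]
    have harg : (s/x) / (-(κ*x)/x) = -(s/(κ*x)) := by
      field_simp
    rw [harg, Real.arctan_neg]
    have hpos : 0 < s/(κ*x) := div_pos hspos (by positivity)
    have hinv : (s/(κ*x))⁻¹ = κ*x/s := by rw [inv_div]
    have harct := Real.arctan_inv_of_pos hpos
    rw [hinv] at harct
    rw [harct, div_div_eq_mul_div]
    ring
  · rw [if_neg h0]
    obtain ⟨hiff, hbne⟩ := hsign h0
    have hcond : ((ρ*ξ*u - κ*x)/x < 0) = (ρ*u ≤ 0) := by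
      rw [eq_iff_iff, div_lt_iff₀ hx, zero_mul]; exact hiff
    simp only [hcond]
    have harg : (s/x) / ((ρ*ξ*u - κ*x)/x) = s/(ρ*ξ*u - κ*x) := by
      field_simp
    rw [harg, div_div_eq_mul_div]
    ring

lemma sqrtP0 (κ ξ ρ u : ℝ) (hξ : 0 < ξ) :
    Real.sqrt (Ppoly κ ξ ρ u 0) = (ξ * |u|) * Real.sqrt (1-ρ^2) := by
  have h : Ppoly κ ξ ρ u 0 = (ξ * |u|)^2 * (1-ρ^2) := by
    unfold Ppoly; rw [mul_pow, sq_abs]; ring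
  rw [h, Real.sqrt_mul (sq_nonneg _), Real.sqrt_sq (by positivity)]

lemma phi0 (κ ξ ρ u : ℝ) (hξ : 0 < ξ) (hu : u ≠ 0) (hρ2 : 0 < 1 - ρ^2) :
    phiF κ ξ ρ u 0 = cRho ρ u / (ξ * |u|) := by
  have hau : 0 < |u| := abs_pos.2 hu
  have hr : 0 < Real.sqrt (1-ρ^2) := Real.sqrt_pos.2 hρ2
  unfold phiF cRho
  rw [sqrtP0 κ ξ ρ u hξ]
  by_cases h0 : ρ = 0
  · rw [if_pos h0, if_pos h0]
    subst h0
    have h1 : Real.sqrt (1-(0:ℝ)^2) = 1 := by norm_num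
    rw [h1]
    have h2 : κ*0/(ξ * |u| * 1) = 0 := by simp
    rw [h2, Real.arctan_zero]
    field_simp
    ring
  · rw [if_neg h0, if_neg h0]
    have harg : Real.arctan ((ξ * |u|) * Real.sqrt (1-ρ^2) / (ρ*ξ*u - κ*0)) =
        sgn' u * Real.arctan (Real.sqrt (1-ρ^2)/ρ) := by
      rcases lt_or_gt_of_ne hu with hneg | hpos
      · have habs : |u| = -u := abs_of_neg hneg
        have h3 : (ξ * |u|) * Real.sqrt (1-ρ^2) / (ρ*ξ*u - κ*0) = -(Real.sqrt (1-ρ^2)/ρ) := by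
          rw [habs]
          field_simp
          ring
        rw [h3, Real.arctan_neg]
        unfold sgn'
        rw [if_neg (not_le.2 hneg)]
        ring
      · have habs : |u| = u := abs_of_pos hpos
        have h3 : (ξ * |u|) * Real.sqrt (1-ρ^2) / (ρ*ξ*u - κ*0) = Real.sqrt (1-ρ^2)/ρ := by
          rw [habs]
          field_simp
          ring
        rw [h3]
        unfold sgn'
        rw [if_pos hpos.le]
        ring
    rw [harg, show (2:ℝ)/(ξ * |u| * Real.sqrt (1-ρ^2)) = 2/Real.sqrt (1-ρ^2)/(ξ * |u|)
      from by rw [div_div, mul_comm], div_mul_eq_mul_div]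

lemma P0pos (κ ξ ρ u : ℝ) (hξ : 0 < ξ) (hu : u ≠ 0) (hρ2 : 0 < 1 - ρ^2) :
    0 < Ppoly κ ξ ρ u 0 := by
  have h : Ppoly κ ξ ρ u 0 = ξ^2*(1-ρ^2)*u^2 := by unfold Ppoly; ring
  rw [h]
  have h2 : (0:ℝ) < u^2 := by positivity
  exact mul_pos (mul_pos (by positivity) hρ2) h2

lemma diffPhi (κ ξ ρ u : ℝ) (hξ : 0 < ξ) (hu : u ≠ 0) (hρ2 : 0 < 1 - ρ^2) :
    DifferentiableAt ℝ (phiF κ ξ ρ u) 0 := by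
  have hP0 : 0 < Ppoly κ ξ ρ u 0 := P0pos κ ξ ρ u hξ hu hρ2
  have hs0 : Real.sqrt (Ppoly κ ξ ρ u 0) ≠ 0 := (Real.sqrt_pos.2 hP0).ne'
  have hPd : DifferentiableAt ℝ (Ppoly κ ξ ρ u) 0 := (diffP κ ξ ρ u).differentiableAt
  have hsd : DifferentiableAt ℝ (fun x => Real.sqrt (Ppoly κ ξ ρ u x)) 0 :=
    (Real.hasStrictDerivAt_sqrt hP0.ne').hasDerivAt.differentiableAt.comp 0 hPd
  by_cases h0 : ρ = 0
  · have he : phiF κ ξ ρ u = fun x => 2 / Real.sqrt (Ppoly κ ξ ρ u x) *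
        (Real.pi/2 + Real.arctan (κ*x / Real.sqrt (Ppoly κ ξ ρ u x))) := by
      funext x; simp only [phiF, if_pos h0]
    rw [he]
    exact ((differentiableAt_const 2).div hsd hs0).mul
      ((differentiableAt_const _).add
        ((Real.differentiable_arctan.differentiableAt).comp 0
          ((differentiableAt_id.const_mul κ).div hsd hs0)))
  · have he : phiF κ ξ ρ u = fun x => 2 / Real.sqrt (Ppoly κ ξ ρ u x) *
        ((if ρ*u ≤ 0 then Real.pi else 0) +
          Real.arctan (Real.sqrt (Ppoly κ ξ ρ u x) / (ρ*ξ*u - κ*x))) := by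
      funext x; simp only [phiF, if_neg h0]
    rw [he]
    have hbne : ρ*ξ*u - κ*0 ≠ 0 := by
      have := mul_ne_zero (mul_ne_zero h0 hξ.ne') hu
      simpa using this
    have hbd : DifferentiableAt ℝ (fun x => ρ*ξ*u - κ*x) 0 :=
      (differentiableAt_const _).sub (differentiableAt_id.const_mul κ)
    exact ((differentiableAt_const 2).div hsd hs0).mul
      ((differentiableAt_const _).add
        ((Real.differentiable_arctan.differentiableAt).comp 0 (hsd.div hbd hbne)))

theorem stmt8 (κ ξ ρ : ℝ) (hκ : 0 < κ) (hξ : 0 < ξ) (hρ : ρ ∈ Set.Ioo (-1 : ℝ) 1)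
    (u : ℝ) (hu : u ≠ 0) :
    (∀ᶠ x in 𝓝[>] (0 : ℝ),
      ξ ^ 2 * (u / x - 1) * (u / x) > (κ - ρ * ξ * (u / x)) ^ 2) ∧
    ((fun x : ℝ => hestTexp κ ρ ξ (u / x) - x / (ξ * |u|) * cRho ρ u)
      =O[𝓝[>] (0 : ℝ)] fun x : ℝ => x ^ 2) := by
  obtain ⟨hρ1, hρ1'⟩ := hρ
  have hρ2 : 0 < 1 - ρ^2 := by nlinarith
  have hP0 : 0 < Ppoly κ ξ ρ u 0 := P0pos κ ξ ρ u hξ hu hρ2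
  have hPc : ContinuousAt (Ppoly κ ξ ρ u) 0 := (diffP κ ξ ρ u).continuous.continuousAt
  have hPev : ∀ᶠ x in 𝓝[>] (0:ℝ), 0 < Ppoly κ ξ ρ u x :=
    (hPc.eventually (eventually_gt_nhds hP0)).filter_mono nhdsWithin_le_nhds
  have hsignev : ∀ᶠ x in 𝓝[>] (0:ℝ),
      (ρ ≠ 0 → ((ρ*ξ*u - κ*x < 0 ↔ ρ*u ≤ 0) ∧ ρ*ξ*u - κ*x ≠ 0)) := by
    by_cases h0 : ρ = 0
    · filter_upwards with x h
      exact absurd h0 h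
    · rcases lt_or_gt_of_ne (mul_ne_zero h0 hu) with hneg | hpos
      · filter_upwards [self_mem_nhdsWithin] with x hx h
        have hx' : (0:ℝ) < x := hx
        have hb : ρ*ξ*u - κ*x < 0 := by nlinarith
        exact ⟨⟨fun _ => hneg.le, fun _ => hb⟩, hb.ne⟩
      · have hc : (0:ℝ) < ρ*ξ*u/κ := by
          apply div_pos _ hκ
          nlinarith
        have hev : ∀ᶠ x in 𝓝 (0:ℝ), x < ρ*ξ*u/κ := eventually_lt_nhds hc
        filter_upwards [hev.filter_mono nhdsWithin_le_nhds, self_mem_nhdsWithin]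
          with x h1 h2 h
        have hx' : (0:ℝ) < x := h2
        have hb : 0 < ρ*ξ*u - κ*x := by
          have := (lt_div_iff₀ hκ).mp h1
          nlinarith
        exact ⟨iff_of_false (not_lt.2 hb.le) (not_le.2 hpos), hb.ne'⟩
  have hEv : ∀ᶠ x in 𝓝[>] (0:ℝ), 0 < x ∧ 0 < Ppoly κ ξ ρ u x ∧
      (ρ ≠ 0 → ((ρ*ξ*u - κ*x < 0 ↔ ρ*u ≤ 0) ∧ ρ*ξ*u - κ*x ≠ 0)) := by
    filter_upwards [self_mem_nhdsWithin, hPev, hsignev] with x h1 h2 h3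
    exact ⟨h1, h2, h3⟩
  constructor
  · filter_upwards [hEv] with x hx
    obtain ⟨hx, hPx, _⟩ := hx
    have hd := hD κ ξ ρ u x hx.ne'
    have hpos : 0 < Ppoly κ ξ ρ u x / x^2 := div_pos hPx (by positivity)
    rw [gt_iff_lt, ← sub_pos, hd]
    exact hpos
  · have hkey : (fun x => hestTexp κ ρ ξ (u/x) - x/(ξ * |u|)*cRho ρ u) =ᶠ[𝓝[>] (0:ℝ)]
        (fun x => x * (phiF κ ξ ρ u x - phiF κ ξ ρ u 0)) := by
      filter_upwards [hEv] with x hx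
      obtain ⟨hx, hPx, hsg⟩ := hx
      rw [key κ ξ ρ u x hκ hx hPx hsg, phi0 κ ξ ρ u hξ hu hρ2]
      ring
    have hdiff : DifferentiableAt ℝ (phiF κ ξ ρ u) 0 := diffPhi κ ξ ρ u hξ hu hρ2
    have h1 : (fun x => phiF κ ξ ρ u x - phiF κ ξ ρ u 0) =O[𝓝[>] (0:ℝ)] (fun x => x) := by
      have h := hdiff.isBigO_sub
      simp only [sub_zero] at h
      exact h.mono nhdsWithin_le_nhds
    have h2 : (fun x : ℝ => x * (phiF κ ξ ρ u x - phiF κ ξ ρ u 0)) =O[𝓝[>] (0:ℝ)]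
        (fun x : ℝ => x * x) := (isBigO_refl (fun x : ℝ => x) _).mul h1
    exact h2.congr' hkey.symm (by filter_upwards with x; exact (pow_two x).symm)

end
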